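/- arXiv:1506.06933 — 2 statements merged into one kernel-verified Lean document; each statement's English description precedes it below -/
import Mathlib

section
/- Completeness of J_CS: for every constant specification CS for J and every formula A, if A is not derivable in the Hilbert system J_CS then there exists a Fitting model M for J_CS and a world w in M such that M,w ⊮ A. -/
namespace JustificationLogic

/-- Justification terms: constants, variables, application, sum, and proof checker `!`. -/
inductive Term : Type
  | const : ℕ → Term
  | var : ℕ → Term
  | app : Term → Term → Term
  | sum : Term → Term → Term
  | bang : Term → Term
  deriving DecidableEq

/-- Formulas of justification logic: atoms, negation, implication, and `t : A`. -/
inductive Formula : Type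
  | atom : ℕ → Formula
  | neg : Formula → Formula
  | impl : Formula → Formula → Formula
  | just : Term → Formula → Formula
  deriving DecidableEq

/-- Disjunction, defined classically: `A ∨ B := ¬A → B`. -/
def Formula.or (A B : Formula) : Formula := (Formula.neg A).impl B

/-- Falsum, defined as the negation of a propositional tautology. -/
def Formula.falsum : Formula := Formula.neg ((Formula.atom 0).impl (Formula.atom 0))

/-- Number of symbols of a term. -/
def Term.size : Term → ℕ
  | .const _ => 1
  | .var _ => 1
  | .app s t => s.size + t.size + 1
  | .sum s t => s.size + t.size + 1
  | .bang t => t.size + 1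

/-- Number of symbols of a formula. -/
def Formula.size : Formula → ℕ
  | .atom _ => 1
  | .neg A => A.size + 1
  | .impl A B => A.size + B.size + 1
  | .just t A => t.size + A.size + 1

/-- An explicit numerical code for terms (an injective Gödel numbering). -/
def Term.code : Term → ℕ
  | .const n => Nat.pair 0 n
  | .var n => Nat.pair 1 n
  | .app s t => Nat.pair 2 (Nat.pair s.code t.code)
  | .sum s t => Nat.pair 3 (Nat.pair s.code t.code)
  | .bang t => Nat.pair 4 t.code

/-- An explicit numerical code for formulas (an injective Gödel numbering). -/
def Formula.code : Formula → ℕ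
  | .atom n => Nat.pair 0 n
  | .neg A => Nat.pair 1 A.code
  | .impl A B => Nat.pair 2 (Nat.pair A.code B.code)
  | .just t A => Nat.pair 3 (Nat.pair t.code A.code)

/-- Substitution of terms for term variables. -/
def Term.subst (σ : ℕ → Term) : Term → Term
  | .const n => .const n
  | .var n => σ n
  | .app s t => .app (s.subst σ) (t.subst σ)
  | .sum s t => .sum (s.subst σ) (t.subst σ)
  | .bang t => .bang (t.subst σ)

/-- Simultaneous substitution of terms for term variables and formulas for atoms. -/
def Formula.subst (σ : ℕ → Term) (τ : ℕ → Formula) : Formula → Formula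
  | .atom n => τ n
  | .neg A => .neg (A.subst σ τ)
  | .impl A B => .impl (A.subst σ τ) (B.subst σ τ)
  | .just t A => .just (t.subst σ) (A.subst σ τ)

/-- `towerT c n = !ⁿc`. -/
def towerT (c : Term) : ℕ → Term
  | 0 => c
  | n + 1 => Term.bang (towerT c n)

/-- `towerF c A n = !ⁿ⁻¹c : ⋯ : !c : c : A` (and `A` for `n = 0`), so that
`(towerT c n) : (towerF c A n)` is the `n`-th formula produced by the rule (AN!). -/
def towerF (c : Term) (A : Formula) : ℕ → Formula
  | 0 => A
  | n + 1 => Formula.just (towerT c n) (towerF c A n)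

/-- The axioms of the justification logics considered, with switches `hd`, `ht`, `h4`
for the axioms (jd), (jt), (j4).  The propositional part (A1) is given by three
standard Hilbert-style schemes axiomatizing classical propositional logic. -/
inductive Ax (hd ht h4 : Bool) : Formula → Prop
  | k (A B : Formula) : Ax hd ht h4 (A.impl (B.impl A))
  | s (A B C : Formula) :
      Ax hd ht h4 ((A.impl (B.impl C)).impl ((A.impl B).impl (A.impl C)))
  | dn (A B : Formula) :
      Ax hd ht h4 (((A.neg).impl (B.neg)).impl (B.impl A))
  | a2 (t s : Term) (A B : Formula) :
      Ax hd ht h4 ((Formula.just t (A.impl B)).impl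
        ((Formula.just s A).impl (Formula.just (Term.app t s) B)))
  | a3 (t s : Term) (A : Formula) :
      Ax hd ht h4 (((Formula.just t A).or (Formula.just s A)).impl
        (Formula.just (Term.sum t s) A))
  | jd (t : Term) : hd = true →
      Ax hd ht h4 ((Formula.just t Formula.falsum).impl Formula.falsum)
  | jt (t : Term) (A : Formula) : ht = true →
      Ax hd ht h4 ((Formula.just t A).impl A)
  | j4 (t : Term) (A : Formula) : h4 = true →
      Ax hd ht h4 ((Formula.just t A).impl
        (Formula.just (Term.bang t) (Formula.just t A)))

/-- Axioms of the respective logics. -/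
def AxJ : Formula → Prop := Ax false false false
def AxJT : Formula → Prop := Ax false true false
def AxJD : Formula → Prop := Ax true false false
def AxJ4 : Formula → Prop := Ax false false true
def AxJD4 : Formula → Prop := Ax true false true
def AxLP : Formula → Prop := Ax false true true

/-- `CS` is a constant specification for the logic with axioms `Axm`:
every member of `CS` is of the form `c : A` with `c` a constant and `A` an axiom. -/
def ConstSpec (Axm : Formula → Prop) (CS : Set Formula) : Prop :=
  ∀ F ∈ CS, ∃ (c : ℕ) (A : Formula), F = Formula.just (Term.const c) A ∧ Axm A

/-- `CS` is axiomatically appropriate for axioms `Axm`: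
for every axiom `A` there is a constant `c` with `c : A ∈ CS`. -/
def AxApprop (Axm : Formula → Prop) (CS : Set Formula) : Prop :=
  ∀ A : Formula, Axm A → ∃ c : ℕ, Formula.just (Term.const c) A ∈ CS

/-- `CS` is schematic: the set of axioms justified by a given constant consists of
axiom schemes, i.e. it is closed under simultaneous substitution of terms for term
variables and formulas for atomic propositions. -/
def Schematic (CS : Set Formula) : Prop :=
  ∀ (c : ℕ) (A : Formula), Formula.just (Term.const c) A ∈ CS →
    ∀ (σ : ℕ → Term) (τ : ℕ → Formula),
      Formula.just (Term.const c) (A.subst σ τ) ∈ CS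

/-- `CS` is decidable: some computable function decides membership in `CS`
(via the explicit Gödel numbering of formulas). -/
def DecidableCS (CS : Set Formula) : Prop :=
  ∃ C : ℕ → Bool, Computable C ∧ ∀ F : Formula, F ∈ CS ↔ C F.code = true

/-- Hilbert-style derivability with the iterated axiom necessitation rule (AN!):
from `c : A ∈ CS` infer `!ⁿc : !ⁿ⁻¹c : ⋯ : !c : c : A` for every `n ≥ 0`. -/
inductive DerivB (Axm : Formula → Prop) (CS : Set Formula) : Formula → Prop
  | ax {A : Formula} : Axm A → DerivB Axm CS A
  | mp {A B : Formula} : DerivB Axm CS (A.impl B) → DerivB Axm CS A → DerivB Axm CS B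
  | an (c : ℕ) (A : Formula) (n : ℕ) :
      Formula.just (Term.const c) A ∈ CS →
      DerivB Axm CS (Formula.just (towerT (Term.const c) n) (towerF (Term.const c) A n))

/-- Hilbert-style derivability with the simple axiom necessitation rule (AN):
from `c : A ∈ CS` infer `c : A`. -/
inductive DerivS (Axm : Formula → Prop) (CS : Set Formula) : Formula → Prop
  | ax {A : Formula} : Axm A → DerivS Axm CS A
  | mp {A B : Formula} : DerivS Axm CS (A.impl B) → DerivS Axm CS A → DerivS Axm CS B
  | an (c : ℕ) (A : Formula) :
      Formula.just (Term.const c) A ∈ CS →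
      DerivS Axm CS (Formula.just (Term.const c) A)

/-- A structure for Fitting models: a nonempty set of worlds, an accessibility
relation, an evidence relation and a valuation. -/
structure Model : Type 1 where
  World : Type
  nonempty : Nonempty World
  R : World → World → Prop
  E : Term → Formula → World → Prop
  val : ℕ → World → Prop

/-- The satisfaction relation `M, w ⊩ A`. -/
def Sat (M : Model) : Formula → M.World → Prop
  | .atom n, w => M.val n w
  | .neg A, w => ¬ Sat M A w
  | .impl A B, w => Sat M A w → Sat M B w
  | .just t A, w => M.E t A w ∧ ∀ v : M.World, M.R w v → Sat M A v

/-- The evidence relation of a model, as a set of triples. -/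
def EvSet (M : Model) : Set (Term × Formula × M.World) :=
  {x | M.E x.1 x.2.1 x.2.2}

/-- The graph of the valuation: the set `{(w, p) | w ∈ ν(p)}`. -/
def ValSet (M : Model) : Set (M.World × ℕ) :=
  {p | M.val p.2 p.1}

/-- Seriality of a relation: every world has a successor. -/
def Serial {W : Type} (R : W → W → Prop) : Prop := ∀ w : W, ∃ v : W, R w v

/-- Admissible evidence relation for the logics without the (j4) axiom:
closure under sum and application, and the constant specification condition
with iterated `!`. -/
def AdmissibleBang (CS : Set Formula) {W : Type}
    (E : Set (Term × Formula × W)) : Prop :=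
  (∀ (s t : Term) (A : Formula) (w : W),
      ((s, A, w) ∈ E ∨ (t, A, w) ∈ E) → (Term.sum s t, A, w) ∈ E) ∧
  (∀ (s t : Term) (A B : Formula) (w : W),
      (s, A.impl B, w) ∈ E → (t, A, w) ∈ E → (Term.app s t, B, w) ∈ E) ∧
  (∀ (c : ℕ) (A : Formula) (w : W) (n : ℕ),
      Formula.just (Term.const c) A ∈ CS →
      (towerT (Term.const c) n, towerF (Term.const c) A n, w) ∈ E)

/-- Admissible evidence relation for the logics with the (j4) axiom:
closure under sum and application, the simple constant specification condition,
closure under `!`, and monotonicity along the accessibility relation. -/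
def AdmissibleJ4 (CS : Set Formula) {W : Type} (R : W → W → Prop)
    (E : Set (Term × Formula × W)) : Prop :=
  (∀ (s t : Term) (A : Formula) (w : W),
      ((s, A, w) ∈ E ∨ (t, A, w) ∈ E) → (Term.sum s t, A, w) ∈ E) ∧
  (∀ (s t : Term) (A B : Formula) (w : W),
      (s, A.impl B, w) ∈ E → (t, A, w) ∈ E → (Term.app s t, B, w) ∈ E) ∧
  (∀ (c : ℕ) (A : Formula) (w : W),
      Formula.just (Term.const c) A ∈ CS → (Term.const c, A, w) ∈ E) ∧
  (∀ (t : Term) (A : Formula) (w : W),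
      (t, A, w) ∈ E → (Term.bang t, Formula.just t A, w) ∈ E) ∧
  (∀ (t : Term) (A : Formula) (w v : W),
      (t, A, w) ∈ E → R w v → (t, A, v) ∈ E)

/-- `M` is a Fitting model for `J_CS`. -/
def IsModelJ (CS : Set Formula) (M : Model) : Prop :=
  AdmissibleBang CS (EvSet M)

/-- `M` is a Fitting model for `JT_CS`: additionally `R` is reflexive. -/
def IsModelJT (CS : Set Formula) (M : Model) : Prop :=
  Reflexive M.R ∧ AdmissibleBang CS (EvSet M)

/-- `M` is a Fitting model for `JD_CS`: additionally `R` is serial. -/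
def IsModelJD (CS : Set Formula) (M : Model) : Prop :=
  Serial M.R ∧ AdmissibleBang CS (EvSet M)

/-- `M` is a Fitting model for `J4_CS`: `R` is transitive. -/
def IsModelJ4 (CS : Set Formula) (M : Model) : Prop :=
  Transitive M.R ∧ AdmissibleJ4 CS M.R (EvSet M)

/-- `M` is a Fitting model for `JD4_CS`: `R` is serial and transitive. -/
def IsModelJD4 (CS : Set Formula) (M : Model) : Prop :=
  Serial M.R ∧ Transitive M.R ∧ AdmissibleJ4 CS M.R (EvSet M)

/-- `M` is a Fitting model for `LP_CS`: `R` is reflexive and transitive. -/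
def IsModelLP (CS : Set Formula) (M : Model) : Prop :=
  Reflexive M.R ∧ Transitive M.R ∧ AdmissibleJ4 CS M.R (EvSet M)

/-- `B` is a base for the evidence relation of `M`, and that evidence relation is
minimal (least) among the admissible ones (non-(j4) version) containing `B`. -/
def MinBaseBang (CS : Set Formula) (M : Model)
    (B : Set (Term × Formula × M.World)) : Prop :=
  B ⊆ EvSet M ∧
  ∀ E' : Set (Term × Formula × M.World),
    AdmissibleBang CS E' → B ⊆ E' → EvSet M ⊆ E'

/-- `B` is a base for the evidence relation of `M`, and that evidence relation is
minimal (least) among the admissible ones ((j4) version) containing `B`. -/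
def MinBaseJ4 (CS : Set Formula) (M : Model)
    (B : Set (Term × Formula × M.World)) : Prop :=
  B ⊆ EvSet M ∧
  ∀ E' : Set (Term × Formula × M.World),
    AdmissibleJ4 CS M.R E' → B ⊆ E' → EvSet M ⊆ E'

/-- `M` is finitary (non-(j4) version): finitely many worlds, the evidence relation
is the minimal admissible one over some finite base, and the valuation has finite graph. -/
def FinitaryBang (CS : Set Formula) (M : Model) : Prop :=
  Finite M.World ∧
  (∃ B : Set (Term × Formula × M.World), B.Finite ∧ MinBaseBang CS M B) ∧
  (ValSet M).Finite

/-- `M` is finitary ((j4) version): finitely many worlds, the evidence relation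
is the minimal admissible one over some finite base, and the valuation has finite graph. -/
def FinitaryJ4 (CS : Set Formula) (M : Model) : Prop :=
  Finite M.World ∧
  (∃ B : Set (Term × Formula × M.World), B.Finite ∧ MinBaseJ4 CS M B) ∧
  (ValSet M).Finite

section Completeness

/-- Derivability from a set of hypotheses. -/
inductive Der (CS : Set Formula) (Γ : Set Formula) : Formula → Prop
  | ax {A : Formula} : AxJ A → Der CS Γ A
  | hyp {A : Formula} : A ∈ Γ → Der CS Γ A
  | mp {A B : Formula} : Der CS Γ (A.impl B) → Der CS Γ A → Der CS Γ B
  | an (c : ℕ) (A : Formula) (n : ℕ) :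
      Formula.just (Term.const c) A ∈ CS →
      Der CS Γ (Formula.just (towerT (Term.const c) n) (towerF (Term.const c) A n))

lemma Der.mono {CS Γ Δ : Set Formula} {A : Formula} (h : Der CS Γ A) (hs : Γ ⊆ Δ) :
    Der CS Δ A := by
  induction h with
  | ax h => exact .ax h
  | hyp h => exact .hyp (hs h)
  | mp _ _ ih1 ih2 => exact .mp ih1 ih2
  | an c A n h => exact .an c A n h

lemma derivB_of_der {CS : Set Formula} {A : Formula} (h : Der CS ∅ A) : DerivB AxJ CS A := by
  induction h with
  | ax h => exact .ax h
  | hyp h => exact absurd h (Set.notMem_empty _)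
  | mp _ _ ih1 ih2 => exact .mp ih1 ih2
  | an c A n h => exact .an c A n h

lemma der_of_derivB {CS Γ : Set Formula} {A : Formula} (h : DerivB AxJ CS A) : Der CS Γ A := by
  induction h with
  | ax h => exact .ax h
  | mp _ _ ih1 ih2 => exact .mp ih1 ih2
  | an c A n h => exact .an c A n h

lemma Der.ii {CS Γ : Set Formula} (A : Formula) : Der CS Γ (A.impl A) :=
  .mp (.mp (.ax (Ax.s A (A.impl A) A)) (.ax (Ax.k A (A.impl A)))) (.ax (Ax.k A A))

/-- The deduction theorem. -/
lemma deduction {CS Γ : Set Formula} {A B : Formula}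
    (h : Der CS (insert A Γ) B) : Der CS Γ (A.impl B) := by
  induction h with
  | @ax B h => exact .mp (.ax (Ax.k B A)) (.ax h)
  | @hyp B h =>
    rcases Set.mem_insert_iff.mp h with rfl | h
    · exact Der.ii _
    · exact .mp (.ax (Ax.k B A)) (.hyp h)
  | @mp C D _ _ ih1 ih2 => exact .mp (.mp (.ax (Ax.s A C D)) ih1) ih2
  | an c B n h => exact .mp (.ax (Ax.k _ A)) (.an c B n h)

/-- Ex falso: from `A` and `¬A` derive anything. -/
lemma efq {CS Γ : Set Formula} {A : Formula} (B : Formula)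
    (h : Der CS Γ A) (hn : Der CS Γ A.neg) : Der CS Γ B :=
  .mp (.mp (.ax (Ax.dn B A)) (.mp (.ax (Ax.k A.neg B.neg)) hn)) h

/-- The tautology `T` with `falsum = ¬T`. -/
lemma derT {CS Γ : Set Formula} : Der CS Γ ((Formula.atom 0).impl (Formula.atom 0)) :=
  Der.ii _

lemma dne {CS Γ : Set Formula} {A : Formula} (h : Der CS Γ A.neg.neg) : Der CS Γ A := by
  have h1 : Der CS (insert A.neg Γ) Formula.falsum :=
    efq _ (.hyp (Set.mem_insert _ _)) (h.mono (Set.subset_insert _ _))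
  exact .mp (.mp (.ax (Ax.dn A ((Formula.atom 0).impl (Formula.atom 0)))) (deduction h1)) derT

lemma neg_intro {CS Γ : Set Formula} {A : Formula}
    (h : Der CS Γ (A.impl Formula.falsum)) : Der CS Γ A.neg := by
  have h1 : Der CS (insert A.neg.neg Γ) Formula.falsum :=
    .mp (h.mono (Set.subset_insert _ _)) (dne (.hyp (Set.mem_insert _ _)))
  exact .mp (.mp (.ax (Ax.dn A.neg ((Formula.atom 0).impl (Formula.atom 0))))
    (deduction h1)) derT

def Consistent (CS Γ : Set Formula) : Prop := ¬ Der CS Γ Formula.falsum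

/-- Properties of a maximal consistent set that we need. -/
structure MCS (CS : Set Formula) (Δ : Set Formula) : Prop where
  con : Consistent CS Δ
  closed : ∀ B : Formula, Der CS Δ B → B ∈ Δ
  compl : ∀ B : Formula, B ∉ Δ → B.neg ∈ Δ

lemma MCS.not_mem_of_neg {CS Δ : Set Formula} (h : MCS CS Δ) {B : Formula}
    (hB : B.neg ∈ Δ) : B ∉ Δ := fun hB' => h.con (efq _ (.hyp hB') (.hyp hB))

lemma MCS.impl_mem {CS Δ : Set Formula} (h : MCS CS Δ) {B C : Formula} :
    B.impl C ∈ Δ ↔ (B ∈ Δ → C ∈ Δ) := by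
  constructor
  · intro hi hB; exact h.closed _ (.mp (.hyp hi) (.hyp hB))
  · intro hi
    by_cases hB : B ∈ Δ
    · exact h.closed _ (.mp (.ax (Ax.k C B)) (.hyp (hi hB)))
    · exact h.closed _ (.mp (.ax (Ax.dn C B)) (.mp (.ax (Ax.k B.neg C.neg))
        (.hyp (h.compl _ hB))))

/-- Compactness of derivability: every derivation uses finitely many hypotheses. -/
lemma der_finite {CS Γ : Set Formula} {A : Formula} (h : Der CS Γ A) :
    ∃ Γ₀ : Set Formula, Γ₀ ⊆ Γ ∧ Γ₀.Finite ∧ Der CS Γ₀ A := by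
  induction h with
  | @ax C h => exact ⟨∅, Set.empty_subset _, Set.finite_empty, .ax h⟩
  | @hyp C h => exact ⟨{C}, Set.singleton_subset_iff.mpr h, Set.finite_singleton _,
      .hyp rfl⟩
  | mp _ _ ih1 ih2 =>
    obtain ⟨Γ₁, hs1, hf1, hd1⟩ := ih1
    obtain ⟨Γ₂, hs2, hf2, hd2⟩ := ih2
    exact ⟨Γ₁ ∪ Γ₂, Set.union_subset hs1 hs2, hf1.union hf2,
      .mp (hd1.mono Set.subset_union_left) (hd2.mono Set.subset_union_right)⟩
  | an c A n h => exact ⟨∅, Set.empty_subset _, Set.finite_empty, .an c A n h⟩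

/-- A finite subset of the union of a nonempty chain lies in one member. -/
lemma finite_subset_chain {c : Set (Set Formula)} (hc : IsChain (· ⊆ ·) c)
    (hne : c.Nonempty) {t : Set Formula} (ht : t.Finite) (hsub : t ⊆ ⋃₀ c) :
    ∃ s ∈ c, t ⊆ s := by
  refine Set.Finite.induction_on (motive := fun t _ => t ⊆ ⋃₀ c → ∃ s ∈ c, t ⊆ s) t ht
    (fun _ => ⟨hne.choose, hne.choose_spec, Set.empty_subset _⟩) ?_ hsub
  rintro a t ha htf ih hsub'
  obtain ⟨s, hs, hts⟩ := ih (Set.Subset.trans (Set.subset_insert _ _) hsub')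
  obtain ⟨s', hs', has'⟩ := hsub' (Set.mem_insert a t)
  rcases eq_or_ne s s' with rfl | hne'
  · exact ⟨s, hs, Set.insert_subset has' hts⟩
  rcases hc hs hs' hne' with hss | hss
  · exact ⟨s', hs', Set.insert_subset has' (hts.trans hss)⟩
  · exact ⟨s, hs, Set.insert_subset (hss has') hts⟩

/-- Lindenbaum's lemma. -/
lemma lindenbaum {CS Γ : Set Formula} (h : Consistent CS Γ) :
    ∃ Δ : Set Formula, Γ ⊆ Δ ∧ MCS CS Δ := by
  obtain ⟨Δ, hΓΔ, hmax⟩ := zorn_subset_nonempty {Δ : Set Formula | Consistent CS Δ}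
    (fun c hcS hc hne => by
      refine ⟨⋃₀ c, ?_, fun s hs => Set.subset_sUnion_of_mem hs⟩
      intro hder
      obtain ⟨Γ₀, hs, hf, hd⟩ := der_finite hder
      obtain ⟨s, hsc, hΓ₀s⟩ := finite_subset_chain hc hne hf hs
      exact hcS hsc (hd.mono hΓ₀s)) Γ h
  have hcon : Consistent CS Δ := hmax.1
  have hclosed : ∀ B : Formula, Der CS Δ B → B ∈ Δ := by
    intro B hB
    have hins : Consistent CS (insert B Δ) := fun hder =>
      hcon (.mp (deduction hder) hB)
    exact hmax.2 hins (Set.subset_insert _ _) (Set.mem_insert _ _)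
  refine ⟨Δ, hΓΔ, hcon, hclosed, ?_⟩
  intro B hB
  apply hclosed
  apply neg_intro
  apply deduction
  by_contra hder
  exact hB (hmax.2 hder (Set.subset_insert _ _) (Set.mem_insert _ _))

/-- The canonical model. -/
def canon (CS : Set Formula) (h : Nonempty {Δ : Set Formula // MCS CS Δ}) : Model where
  World := {Δ : Set Formula // MCS CS Δ}
  nonempty := h
  R := fun Δ Δ' => ∀ (t : Term) (B : Formula), Formula.just t B ∈ Δ.1 → B ∈ Δ'.1
  E := fun t B Δ => Formula.just t B ∈ Δ.1
  val := fun n Δ => Formula.atom n ∈ Δ.1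

lemma truth_lemma (CS : Set Formula) (h : Nonempty {Δ : Set Formula // MCS CS Δ})
    (B : Formula) :
    ∀ Δ : {Δ : Set Formula // MCS CS Δ}, Sat (canon CS h) B Δ ↔ B ∈ Δ.1 := by
  induction B with
  | atom n => intro Δ; exact Iff.rfl
  | neg B ih =>
    intro Δ
    simp only [Sat]
    rw [ih Δ]
    constructor
    · exact fun hB => Δ.2.compl _ hB
    · exact fun hB => Δ.2.not_mem_of_neg hB
  | impl B C ih1 ih2 =>
    intro Δ
    simp only [Sat]
    rw [ih1 Δ, ih2 Δ]
    exact Δ.2.impl_mem.symm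
  | just t B ih =>
    intro Δ
    simp only [Sat]
    constructor
    · exact fun hB => hB.1
    · intro hB
      exact ⟨hB, fun Δ' hR => (ih Δ').mpr (hR t B hB)⟩

lemma canon_isModelJ (CS : Set Formula) (h : Nonempty {Δ : Set Formula // MCS CS Δ}) :
    IsModelJ CS (canon CS h) := by
  refine ⟨?_, ?_, ?_⟩
  · rintro s t B Δ (hmem | hmem)
    · refine Δ.2.closed _ (.mp (.ax (Ax.a3 s t B)) ?_)
      apply deduction
      exact efq _ (Der.hyp (Set.mem_insert_of_mem _ hmem)) (.hyp (Set.mem_insert _ _))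
    · exact Δ.2.closed _ (.mp (.ax (Ax.a3 s t B))
        (.mp (.ax (Ax.k (Formula.just t B) (Formula.just s B).neg)) (.hyp hmem)))
  · intro s t B C Δ h1 h2
    exact Δ.2.closed _ (.mp (.mp (.ax (Ax.a2 s t B C)) (.hyp h1)) (.hyp h2))
  · intro c B Δ n hc
    exact Δ.2.closed _ (.an c B n hc)

end Completeness

/-- Completeness of `J_CS`: if a formula is not derivable in the Hilbert system
`J_CS` (with constant specification `CS`), then it fails at some world
of some Fitting model for `J_CS`. -/
theorem completeness_J (CS : Set Formula) (hCS : ConstSpec AxJ CS) (A : Formula)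
    (hA : ¬ DerivB AxJ CS A) :
    ∃ M : Model, IsModelJ CS M ∧ ∃ w : M.World, ¬ Sat M A w := by
  have hcons : Consistent CS (insert A.neg ∅) := by
    intro hder
    apply hA
    apply derivB_of_der
    have h1 : Der CS ∅ (A.neg.impl Formula.falsum) := deduction hder
    exact .mp (.mp (.ax (Ax.dn A ((Formula.atom 0).impl (Formula.atom 0)))) h1) derT
  obtain ⟨Δ, hΓΔ, hΔ⟩ := lindenbaum hcons
  have hne : Nonempty {Δ : Set Formula // MCS CS Δ} := ⟨⟨Δ, hΔ⟩⟩
  refine ⟨canon CS hne, canon_isModelJ CS hne,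
    (⟨Δ, hΔ⟩ : {Δ : Set Formula // MCS CS Δ}), ?_⟩
  rw [truth_lemma CS hne A ⟨Δ, hΔ⟩]
  exact hΔ.not_mem_of_neg (hΓΔ (Set.mem_insert _ _))

end JustificationLogic
end

section
/- Completeness of J4_CS: for every constant specification CS for J4 and every formula A, if A is not derivable in the Hilbert system J4_CS then there exists a Fitting model M for J4_CS and a world w in M such that M,w ⊮ A. -/
namespace JustificationLogic

namespace Canon

/-- Derivability from a set of hypotheses in `J4_CS`. -/
inductive DF (CS : Set Formula) (Γ : Set Formula) : Formula → Prop
  | ax {A} : AxJ4 A → DF CS Γ A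
  | hyp {A} : A ∈ Γ → DF CS Γ A
  | an {c : ℕ} {A} : Formula.just (Term.const c) A ∈ CS →
      DF CS Γ (Formula.just (Term.const c) A)
  | mp {A B} : DF CS Γ (A.impl B) → DF CS Γ A → DF CS Γ B

variable {CS : Set Formula} {Γ Δ : Set Formula} {A B C : Formula}

theorem DF.mono (h : DF CS Γ A) (hs : Γ ⊆ Δ) : DF CS Δ A := by
  induction h with
  | ax h => exact .ax h
  | hyp h => exact .hyp (hs h)
  | an h => exact .an h
  | mp _ _ ih1 ih2 => exact .mp ih1 ih2

theorem axK (A B : Formula) : DF CS Γ (A.impl (B.impl A)) := .ax (Ax.k A B)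

theorem axDN (A B : Formula) :
    DF CS Γ ((A.neg.impl B.neg).impl (B.impl A)) := .ax (Ax.dn A B)

theorem idd (A : Formula) : DF CS Γ (A.impl A) :=
  .mp (.mp (.ax (Ax.s A (A.impl A) A)) (axK A (A.impl A))) (axK A A)

/-- Deduction theorem. -/
theorem dt (h : DF CS (insert A Γ) B) : DF CS Γ (A.impl B) := by
  induction h with
  | ax h => exact .mp (axK _ _) (.ax h)
  | hyp h =>
    rcases h with rfl | h
    · exact idd _
    · exact .mp (axK _ _) (.hyp h)
  | an h => exact .mp (axK _ _) (.an h)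
  | mp _ _ ih1 ih2 => exact .mp (.mp (.ax (Ax.s _ _ _)) ih1) ih2

theorem dti (h : DF CS Γ (A.impl B)) : DF CS (insert A Γ) B :=
  .mp (h.mono (Set.subset_insert _ _)) (.hyp (Set.mem_insert _ _))

theorem syl (h1 : DF CS Γ (A.impl B)) (h2 : DF CS Γ (B.impl C)) :
    DF CS Γ (A.impl C) :=
  dt (.mp (h2.mono (Set.subset_insert _ _)) (dti h1))

/-- Double negation elimination. -/
theorem dne (A : Formula) : DF CS Γ (A.neg.neg.impl A) := by
  have h1 : DF CS Γ (A.neg.neg.impl (A.neg.neg.neg.neg.impl A.neg.neg)) := axK _ _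
  have h2 : DF CS Γ ((A.neg.neg.neg.neg.impl A.neg.neg).impl (A.neg.impl A.neg.neg.neg)) :=
    axDN A.neg.neg.neg A.neg
  have h3 := syl h1 h2
  have h4 : DF CS Γ ((A.neg.impl A.neg.neg.neg).impl (A.neg.neg.impl A)) := axDN A A.neg.neg
  have h5 := syl h3 h4
  exact .mp (.mp (.ax (Ax.s _ _ _)) h5) (idd _)

/-- Double negation introduction. -/
theorem dni (A : Formula) : DF CS Γ (A.impl A.neg.neg) :=
  .mp (axDN A.neg.neg A) (dne A.neg)

/-- Contraposition. -/
theorem contra (A B : Formula) : DF CS Γ ((A.impl B).impl (B.neg.impl A.neg)) := by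
  apply dt
  have hAB : DF CS (insert (A.impl B) Γ) (A.impl B) := .hyp (Set.mem_insert _ _)
  have h1 := syl (dne A) hAB
  have h2 := syl h1 (dni B)
  exact .mp (axDN A.neg B.neg) h2

/-- Ex falso: `¬A → (A → B)`. -/
theorem exF (A B : Formula) : DF CS Γ (A.neg.impl (A.impl B)) := by
  apply dt
  have hnA : DF CS (insert A.neg Γ) A.neg := .hyp (Set.mem_insert _ _)
  exact .mp (axDN B A) (.mp (axK A.neg B.neg) hnA)

/-- Negation introduction: `(A → ⊥) → ¬A`. -/
theorem negI (A : Formula) : DF CS Γ ((A.impl Formula.falsum).impl A.neg) := by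
  apply dt
  set T : Formula := (Formula.atom 0).impl (Formula.atom 0) with hT
  have h : DF CS (insert (A.impl Formula.falsum) Γ) (A.impl T.neg) :=
    .hyp (Set.mem_insert _ _)
  have h2 : DF CS (insert (A.impl Formula.falsum) Γ) (T.neg.neg.impl A.neg) :=
    .mp (contra A T.neg) h
  exact .mp h2 (.mp (dni T) (idd _))

theorem orI1 (h : DF CS Γ A) : DF CS Γ (A.or B) := by
  apply dt
  exact .mp (.mp (exF A B) (.hyp (Set.mem_insert _ _))) (h.mono (Set.subset_insert _ _))

theorem orI2 (h : DF CS Γ B) : DF CS Γ (A.or B) := .mp (axK B A.neg) h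

/-- Consistency. -/
def Con (CS Γ : Set Formula) : Prop := ¬ DF CS Γ Formula.falsum

/-- Maximal consistent set. -/
def MCS (CS Γ : Set Formula) : Prop := Con CS Γ ∧ ∀ A : Formula, A ∈ Γ ∨ A.neg ∈ Γ

theorem MCS.closed (h : MCS CS Γ) (hd : DF CS Γ A) : A ∈ Γ := by
  rcases h.2 A with hA | hA
  · exact hA
  · exact absurd (DF.mp (DF.mp (exF A Formula.falsum) (.hyp hA)) hd) h.1

theorem MCS.neg_mem (h : MCS CS Γ) : A.neg ∈ Γ ↔ A ∉ Γ := by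
  constructor
  · intro hn hA
    exact h.1 (DF.mp (DF.mp (exF A Formula.falsum) (.hyp hn)) (.hyp hA))
  · intro hA
    rcases h.2 A with h' | h'
    · exact absurd h' hA
    · exact h'

theorem MCS.impl_mem (h : MCS CS Γ) : (A.impl B) ∈ Γ ↔ (A ∈ Γ → B ∈ Γ) := by
  constructor
  · intro hi hA
    exact h.closed (.mp (.hyp hi) (.hyp hA))
  · intro hi
    by_cases hA : A ∈ Γ
    · exact h.closed (.mp (axK B A) (.hyp (hi hA)))
    · exact h.closed (.mp (exF A B) (.hyp (h.neg_mem.mpr hA)))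

/-- Compactness. -/
theorem DF.finite (h : DF CS Γ A) :
    ∃ Γ0 : Set Formula, Γ0 ⊆ Γ ∧ Γ0.Finite ∧ DF CS Γ0 A := by
  induction h with
  | @ax A h => exact ⟨∅, Set.empty_subset _, Set.finite_empty, .ax h⟩
  | @hyp A h =>
    exact ⟨{A}, Set.singleton_subset_iff.mpr h, Set.finite_singleton _, .hyp rfl⟩
  | an h => exact ⟨∅, Set.empty_subset _, Set.finite_empty, .an h⟩
  | mp _ _ ih1 ih2 =>
    obtain ⟨Γ1, hs1, hf1, hd1⟩ := ih1
    obtain ⟨Γ2, hs2, hf2, hd2⟩ := ih2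
    exact ⟨Γ1 ∪ Γ2, Set.union_subset hs1 hs2, hf1.union hf2,
      .mp (hd1.mono Set.subset_union_left) (hd2.mono Set.subset_union_right)⟩

theorem chain_finite_subset {c : Set (Set Formula)} (hc : IsChain (· ⊆ ·) c)
    (hne : c.Nonempty) {Γ0 : Set Formula} (hfin : Γ0.Finite) (hsub : Γ0 ⊆ ⋃₀ c) :
    ∃ s ∈ c, Γ0 ⊆ s := by
  revert hsub
  refine Set.Finite.induction_on (motive := fun s _ => s ⊆ ⋃₀ c → ∃ t ∈ c, s ⊆ t) Γ0 hfin ?_ ?_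
  · intro _
    obtain ⟨s, hs⟩ := hne
    exact ⟨s, hs, Set.empty_subset _⟩
  · intro a s _ _ ih hsub
    obtain ⟨u, hu, hsu⟩ := ih ((Set.subset_insert _ _).trans hsub)
    obtain ⟨t, ht, hat⟩ := hsub (Set.mem_insert a s)
    rcases eq_or_ne u t with rfl | hne'
    · exact ⟨u, hu, Set.insert_subset hat hsu⟩
    rcases hc hu ht hne' with h' | h'
    · exact ⟨t, ht, Set.insert_subset hat (hsu.trans h')⟩
    · exact ⟨u, hu, Set.insert_subset (h' hat) hsu⟩

/-- Lindenbaum lemma. -/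
theorem lindenbaum (h : Con CS Γ) : ∃ Δ : Set Formula, Γ ⊆ Δ ∧ MCS CS Δ := by
  have hch : ∀ c ⊆ {Δ : Set Formula | Con CS Δ}, IsChain (· ⊆ ·) c → c.Nonempty →
      ∃ ub ∈ {Δ : Set Formula | Con CS Δ}, ∀ s ∈ c, s ⊆ ub := by
    intro c hcS hchain hcne
    refine ⟨⋃₀ c, ?_, fun s hs => Set.subset_sUnion_of_mem hs⟩
    intro hbad
    obtain ⟨Γ0, hΓ0sub, hΓ0fin, hΓ0d⟩ := hbad.finite
    obtain ⟨s, hs, hsub'⟩ := chain_finite_subset hchain hcne hΓ0fin hΓ0sub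
    exact hcS hs (hΓ0d.mono hsub')
  obtain ⟨Δ, hsub, hmax⟩ := zorn_subset_nonempty {Δ | Con CS Δ} hch Γ h
  refine ⟨Δ, hsub, hmax.1, ?_⟩
  intro A
  by_contra hcon
  push_neg at hcon
  obtain ⟨hA, hnA⟩ := hcon
  have key : ∀ B : Formula, Con CS (insert B Δ) → B ∈ Δ := by
    intro B hB
    exact hmax.2 hB (Set.subset_insert _ _) (Set.mem_insert _ _)
  have h1 : DF CS (insert A Δ) Formula.falsum := by
    by_contra h'; exact hA (key A h')
  have h2 : DF CS (insert A.neg Δ) Formula.falsum := by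
    by_contra h'; exact hnA (key A.neg h')
  have d1 : DF CS Δ A.neg := .mp (negI A) (dt h1)
  exact hmax.1 (DF.mp (dt h2) d1)

/-- Worlds of the canonical model. -/
def CanW (CS : Set Formula) : Type := {Γ : Set Formula // MCS CS Γ}

/-- The canonical model. -/
def canModel (CS : Set Formula) (w : CanW CS) : Model where
  World := CanW CS
  nonempty := ⟨w⟩
  R := fun Γ Δ => ∀ (t : Term) (B : Formula), Formula.just t B ∈ Γ.1 → B ∈ Δ.1
  E := fun t A Γ => Formula.just t A ∈ Γ.1
  val := fun n Γ => Formula.atom n ∈ Γ.1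

theorem j4_closed (Γ : CanW CS) {t : Term} (h : Formula.just t A ∈ Γ.1) :
    Formula.just (Term.bang t) (Formula.just t A) ∈ Γ.1 :=
  Γ.2.closed (.mp (.ax (Ax.j4 t A rfl)) (.hyp h))

/-- The truth lemma. -/
theorem truth (w : CanW CS) (B : Formula) (Γ : CanW CS) :
    Sat (canModel CS w) B Γ ↔ B ∈ Γ.1 := by
  induction B generalizing Γ with
  | atom n => exact Iff.rfl
  | neg A ih =>
    show ¬ Sat (canModel CS w) A Γ ↔ _
    rw [ih, Γ.2.neg_mem]
  | impl A B ihA ihB =>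
    show (Sat (canModel CS w) A Γ → Sat (canModel CS w) B Γ) ↔ _
    rw [ihA, ihB, Γ.2.impl_mem]
  | just t A ih =>
    constructor
    · exact fun h => h.1
    · intro h
      exact ⟨h, fun Δ hR => (ih Δ).mpr (hR t A h)⟩

theorem canModel_isModel (w : CanW CS) : IsModelJ4 CS (canModel CS w) := by
  refine ⟨?_, ?_, ?_, ?_, ?_, ?_⟩
  · -- transitivity
    intro Γ Δ Θ h1 h2 t B hB
    exact h2 t B (h1 (Term.bang t) (Formula.just t B) (j4_closed Γ hB))
  · -- sum
    rintro s t B Γ (h | h)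
    · exact Γ.2.closed (.mp (.ax (Ax.a3 s t B)) (orI1 (.hyp h)))
    · exact Γ.2.closed (.mp (.ax (Ax.a3 s t B)) (orI2 (.hyp h)))
  · -- app
    intro s t B C Γ h1 h2
    exact Γ.2.closed (.mp (.mp (.ax (Ax.a2 s t B C)) (.hyp h1)) (.hyp h2))
  · -- constants
    intro c B Γ h
    exact Γ.2.closed (.an h)
  · -- bang
    intro t B Γ h
    exact j4_closed Γ h
  · -- monotonicity
    intro t B Γ Δ h hR
    exact hR (Term.bang t) (Formula.just t B) (j4_closed Γ h)

theorem df_empty_derivS (h : DF CS ∅ A) : DerivS AxJ4 CS A := by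
  induction h with
  | ax h => exact .ax h
  | hyp h => exact absurd h (Set.notMem_empty _)
  | an h => exact .an _ _ h
  | mp _ _ ih1 ih2 => exact .mp ih1 ih2

end Canon

/-- Completeness of `J4_CS`: if a formula is not derivable in the Hilbert system
`J4_CS` (with constant specification `CS`), then it fails at some world
of some Fitting model for `J4_CS`. -/
theorem completeness_J4 (CS : Set Formula) (hCS : ConstSpec AxJ4 CS) (A : Formula)
    (hA : ¬ DerivS AxJ4 CS A) :
    ∃ M : Model, IsModelJ4 CS M ∧ ∃ w : M.World, ¬ Sat M A w := by
  have hcon : Canon.Con CS {A.neg} := by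
    intro hbad
    have h1 : Canon.DF CS ∅ (A.neg.impl Formula.falsum) := Canon.dt (by simpa using hbad)
    have h2 : Canon.DF CS ∅ A.neg.neg := .mp (Canon.negI A.neg) h1
    exact hA (Canon.df_empty_derivS (.mp (Canon.dne A) h2))
  obtain ⟨Δ, hsub, hΔ⟩ := Canon.lindenbaum hcon
  let w : Canon.CanW CS := ⟨Δ, hΔ⟩
  refine ⟨Canon.canModel CS w, Canon.canModel_isModel w, w, ?_⟩
  rw [Canon.truth w A w]
  exact hΔ.neg_mem.mp (hsub rfl)

end JustificationLogic
end
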